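/- Refined single-column formula: for λ = (1^k), μ = ∅, the refined dual Grothendieck polynomial satisfies g_{(1^k)}(t; x) = e_k(t_1, t_2, …, t_{k-1}, x_1, …, x_m), i.e., the generating function ∑_T ∏_i x_i^{c_i(T)} ∏_j t_j^{d_j(T)} over weakly increasing sequences T = (a_1 ≤ ⋯ ≤ a_k) with entries in {1,…,m}, where c_i counts whether i appears and d_j(T) = 1 if a_j = a_{j+1} (entry in row j equals the entry below) and 0 otherwise, equals the elementary symmetric polynomial e_k in the k-1+m variables t_1,…,t_{k-1}, x_1,…,x_m. -/

import Mathlib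

open scoped Classical

/-- The elementary symmetric polynomial of degree `n` evaluated at `x : Fin N → R`. -/
def epoly {R : Type*} [CommSemiring R] {N : ℕ} (n : ℕ) (x : Fin N → R) : R :=
  ∑ s ∈ Finset.powersetCard n (Finset.univ : Finset (Fin N)), ∏ i ∈ s, x i

namespace Stmt18Aux

variable {m n : ℕ}

/-- The position map: a repeat position `j` (where `a j = a (j+1)`) goes to the `t`-index `j`;
a non-repeat position goes to the `x`-index of its value. -/
noncomputable def gmap (a : Fin (n + 1) → Fin m) : Fin (n + 1) → Fin (n + m) :=
  Fin.lastCases (Fin.natAdd n (a (Fin.last n)))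
    (fun j => if a j.castSucc = a j.succ then Fin.castAdd m j else Fin.natAdd n (a j.castSucc))

lemma gmap_last (a : Fin (n + 1) → Fin m) :
    gmap a (Fin.last n) = Fin.natAdd n (a (Fin.last n)) :=
  Fin.lastCases_last

lemma gmap_castSucc (a : Fin (n + 1) → Fin m) (j : Fin n) :
    gmap a j.castSucc =
      if a j.castSucc = a j.succ then Fin.castAdd m j else Fin.natAdd n (a j.castSucc) :=
  Fin.lastCases_castSucc _

lemma castAdd_ne_natAdd (j : Fin n) (v : Fin m) :
    (Fin.castAdd m j : Fin (n + m)) ≠ Fin.natAdd n v := by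
  intro h
  have := congrArg Fin.val h
  simp only [Fin.coe_castAdd, Fin.coe_natAdd] at this
  omega

lemma nonrep_lt {a : Fin (n + 1) → Fin m} (ha : Monotone a) {j : Fin n}
    (hj : a j.castSucc ≠ a j.succ) {i : Fin (n + 1)} (hji : j.succ ≤ i) :
    a j.castSucc < a i :=
  lt_of_lt_of_le (lt_of_le_of_ne (ha (Fin.castSucc_le_succ j)) hj) (ha hji)

lemma natAdd_inj : Function.Injective (Fin.natAdd n : Fin m → Fin (n + m)) :=
  fun a b h => Fin.ext (by have := congrArg Fin.val h; simp only [Fin.coe_natAdd] at this; omega)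

lemma gmap_lt_ne {a : Fin (n + 1) → Fin m} (ha : Monotone a) {i i' : Fin (n + 1)}
    (hlt : i < i') : gmap a i ≠ gmap a i' := by
  have hne : i ≠ Fin.last n := by
    intro h
    exact absurd (lt_of_lt_of_le hlt (Fin.le_last i')) (by rw [h]; exact lt_irrefl _)
  obtain ⟨j, rfl⟩ := Fin.exists_castSucc_eq.mpr hne
  rw [gmap_castSucc]
  by_cases hj : a j.castSucc = a j.succ
  · rw [if_pos hj]
    induction i' using Fin.lastCases with
    | last => rw [gmap_last]; exact castAdd_ne_natAdd _ _
    | cast j' =>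
      rw [gmap_castSucc]
      by_cases hj' : a j'.castSucc = a j'.succ
      · rw [if_pos hj']
        intro h
        have : j = j' := Fin.castAdd_injective _ _ h
        rw [this] at hlt
        exact lt_irrefl _ hlt
      · rw [if_neg hj']; exact castAdd_ne_natAdd _ _
  · rw [if_neg hj]
    have hsle : j.succ ≤ i' := Fin.castSucc_lt_iff_succ_le.mp hlt
    induction i' using Fin.lastCases with
    | last =>
      rw [gmap_last]
      intro h
      exact absurd (natAdd_inj h) (ne_of_lt (nonrep_lt ha hj hsle))
    | cast j' =>
      rw [gmap_castSucc]
      by_cases hj' : a j'.castSucc = a j'.succ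
      · rw [if_pos hj']
        intro h
        exact castAdd_ne_natAdd j' (a j.castSucc) h.symm
      · rw [if_neg hj']
        intro h
        exact absurd (natAdd_inj h) (ne_of_lt (nonrep_lt ha hj hsle))

lemma gmap_inj {a : Fin (n + 1) → Fin m} (ha : Monotone a) : Function.Injective (gmap a) := by
  intro i i' h
  rcases lt_trichotomy i i' with hlt | he | hlt
  · exact absurd h (gmap_lt_ne ha hlt)
  · exact he
  · exact absurd h.symm (gmap_lt_ne ha hlt)

lemma exists_lastocc (a : Fin (n + 1) → Fin m) (i : Fin (n + 1)) :
    ∃ i', (i' = Fin.last n ∨ ∃ j : Fin n, i' = j.castSucc ∧ a j.castSucc ≠ a j.succ) ∧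
      a i' = a i := by
  induction i using Fin.reverseInduction with
  | last => exact ⟨Fin.last n, Or.inl rfl, rfl⟩
  | cast j ih =>
    by_cases h : a j.castSucc = a j.succ
    · obtain ⟨i', hi', he⟩ := ih
      exact ⟨i', hi', he.trans h.symm⟩
    · exact ⟨j.castSucc, Or.inr ⟨j, rfl, h⟩, rfl⟩

lemma mem_castAdd_iff (a : Fin (n + 1) → Fin m) (j : Fin n) :
    Fin.castAdd m j ∈ Finset.image (gmap a) Finset.univ ↔ a j.castSucc = a j.succ := by
  constructor
  · intro h
    obtain ⟨i, -, hi⟩ := Finset.mem_image.mp h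
    induction i using Fin.lastCases with
    | last => rw [gmap_last] at hi; exact absurd hi.symm (castAdd_ne_natAdd _ _)
    | cast j' =>
      rw [gmap_castSucc] at hi
      by_cases hj' : a j'.castSucc = a j'.succ
      · rw [if_pos hj'] at hi
        have : j' = j := Fin.castAdd_injective _ _ hi
        rw [← this]; exact hj'
      · rw [if_neg hj'] at hi; exact absurd hi.symm (castAdd_ne_natAdd _ _)
  · intro h
    exact Finset.mem_image.mpr ⟨j.castSucc, Finset.mem_univ _, by rw [gmap_castSucc, if_pos h]⟩

lemma mem_natAdd_iff (a : Fin (n + 1) → Fin m) (v : Fin m) :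
    Fin.natAdd n v ∈ Finset.image (gmap a) Finset.univ ↔ v ∈ Finset.image a Finset.univ := by
  constructor
  · intro h
    obtain ⟨i, -, hi⟩ := Finset.mem_image.mp h
    induction i using Fin.lastCases with
    | last =>
      rw [gmap_last] at hi
      rw [← natAdd_inj hi]
      exact Finset.mem_image_of_mem a (Finset.mem_univ _)
    | cast j =>
      rw [gmap_castSucc] at hi
      by_cases hj : a j.castSucc = a j.succ
      · rw [if_pos hj] at hi; exact absurd hi (castAdd_ne_natAdd _ _)
      · rw [if_neg hj] at hi
        rw [← natAdd_inj hi]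
        exact Finset.mem_image_of_mem a (Finset.mem_univ _)
  · intro h
    obtain ⟨i, -, rfl⟩ := Finset.mem_image.mp h
    obtain ⟨i', hi', he⟩ := exists_lastocc a i
    refine Finset.mem_image.mpr ⟨i', Finset.mem_univ _, ?_⟩
    rcases hi' with rfl | ⟨j, rfl, hj⟩
    · rw [gmap_last, he]
    · rw [gmap_castSucc, if_neg hj, he]

lemma monotone_ext {a b : Fin (n + 1) → Fin m} (ha : Monotone a) (hb : Monotone b)
    (hrpt : ∀ j : Fin n, a j.castSucc = a j.succ ↔ b j.castSucc = b j.succ)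
    (himg : Finset.image a Finset.univ = Finset.image b Finset.univ) : a = b := by
  have zero_le : ∀ (a b : Fin (n + 1) → Fin m), Monotone a →
      Finset.image a Finset.univ = Finset.image b Finset.univ → a 0 ≤ b 0 := by
    intro a b ha himg
    have : b 0 ∈ Finset.image a Finset.univ :=
      himg ▸ Finset.mem_image_of_mem b (Finset.mem_univ _)
    obtain ⟨i₀, -, hi₀⟩ := Finset.mem_image.mp this
    exact hi₀ ▸ ha (Fin.zero_le i₀)
  have succ_le : ∀ (a b : Fin (n + 1) → Fin m), Monotone a → Monotone b →
      Finset.image a Finset.univ = Finset.image b Finset.univ →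
      ∀ i : Fin n, a i.castSucc = b i.castSucc → b i.castSucc ≠ b i.succ →
        a i.succ ≤ b i.succ := by
    intro a b ha hb himg i hcs hbne
    have hmem : b i.succ ∈ Finset.image a Finset.univ :=
      himg ▸ Finset.mem_image_of_mem b (Finset.mem_univ _)
    obtain ⟨i₀, -, hi₀⟩ := Finset.mem_image.mp hmem
    have hlt : a i.castSucc < a i₀ := by
      rw [hi₀, hcs]
      exact lt_of_le_of_ne (hb (Fin.castSucc_le_succ i)) hbne
    have hle : i.succ ≤ i₀ := by
      rw [← Fin.castSucc_lt_iff_succ_le]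
      by_contra hc
      exact absurd (ha (le_of_not_gt hc)) (not_le_of_gt hlt)
    exact hi₀ ▸ ha hle
  funext i
  induction i using Fin.induction with
  | zero => exact le_antisymm (zero_le a b ha himg) (zero_le b a hb himg.symm)
  | succ i ih =>
    by_cases h : a i.castSucc = a i.succ
    · have hB : b i.castSucc = b i.succ := (hrpt i).mp h
      rw [← h, ← hB, ih]
    · have hB : b i.castSucc ≠ b i.succ := fun hb' => h ((hrpt i).mpr hb')
      exact le_antisymm (succ_le a b ha hb himg i ih hB)
        (succ_le b a hb ha himg.symm i ih.symm h)

lemma weight_eq {R : Type*} [CommSemiring R] (t : Fin n → R) (x : Fin m → R)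
    {a : Fin (n + 1) → Fin m} (ha : Monotone a) :
    ∏ i : Fin (n + 1), Fin.append t x (gmap a i) =
      (∏ v ∈ Finset.image a Finset.univ, x v) *
        ∏ j : Fin n, (if a j.castSucc = a j.succ then t j else 1) := by
  classical
  -- the set of "last occurrence" positions
  set L : Finset (Fin (n + 1)) :=
    insert (Fin.last n)
      ((Finset.univ.filter (fun j : Fin n => ¬ a j.castSucc = a j.succ)).image Fin.castSucc)
    with hL
  have hmemL : ∀ i : Fin (n + 1), i ∈ L ↔
      (i = Fin.last n ∨ ∃ j : Fin n, i = j.castSucc ∧ a j.castSucc ≠ a j.succ) := by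
    intro i
    rw [hL]
    simp only [Finset.mem_insert, Finset.mem_image, Finset.mem_filter, Finset.mem_univ, true_and]
    constructor
    · rintro (h | ⟨j, hj, rfl⟩)
      · exact Or.inl h
      · exact Or.inr ⟨j, rfl, hj⟩
    · rintro (h | ⟨j, rfl, hj⟩)
      · exact Or.inl h
      · exact Or.inr ⟨j, hj, rfl⟩
  have himg : Finset.image a Finset.univ = Finset.image a L := by
    apply Finset.Subset.antisymm
    · intro v hv
      obtain ⟨i, -, rfl⟩ := Finset.mem_image.mp hv
      obtain ⟨i', hi', he⟩ := exists_lastocc a i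
      exact Finset.mem_image.mpr ⟨i', (hmemL i').mpr hi', he⟩
    · exact Finset.image_subset_image (Finset.subset_univ L)
  have hinj : ∀ i ∈ L, ∀ i' ∈ L, a i = a i' → i = i' := by
    have key : ∀ i ∈ L, ∀ i' ∈ L, i < i' → a i ≠ a i' := by
      intro i hi i' hi' hlt
      rcases (hmemL i).mp hi with rfl | ⟨j, rfl, hj⟩
      · exact absurd (lt_of_lt_of_le hlt (Fin.le_last i')) (lt_irrefl _)
      · exact ne_of_lt (nonrep_lt ha hj (Fin.castSucc_lt_iff_succ_le.mp hlt))
    intro i hi i' hi' he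
    rcases lt_trichotomy i i' with hlt | h | hlt
    · exact absurd he (key i hi i' hi' hlt)
    · exact h
    · exact absurd he.symm (key i' hi' i hi hlt)
  have hxprod : ∏ v ∈ Finset.image a Finset.univ, x v = ∏ i ∈ L, x (a i) := by
    rw [himg, Finset.prod_image hinj]
  have hlast_notmem : Fin.last n ∉
      (Finset.univ.filter (fun j : Fin n => ¬ a j.castSucc = a j.succ)).image Fin.castSucc := by
    intro h
    obtain ⟨j, -, hj⟩ := Finset.mem_image.mp h
    exact absurd hj (ne_of_lt (Fin.castSucc_lt_last j))
  have hLprod : ∏ i ∈ L, x (a i) =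
      x (a (Fin.last n)) *
        ∏ j ∈ Finset.univ.filter (fun j : Fin n => ¬ a j.castSucc = a j.succ),
          x (a j.castSucc) := by
    rw [hL, Finset.prod_insert hlast_notmem,
      Finset.prod_image (fun i _ i' _ h => Fin.castSucc_injective n h)]
  rw [Fin.prod_univ_castSucc (fun i => Fin.append t x (gmap a i))]
  have hterm : ∀ j : Fin n, Fin.append t x (gmap a j.castSucc) =
      if a j.castSucc = a j.succ then t j else x (a j.castSucc) := by
    intro j
    rw [gmap_castSucc]
    by_cases hj : a j.castSucc = a j.succ
    · rw [if_pos hj, if_pos hj, Fin.append_left]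
    · rw [if_neg hj, if_neg hj, Fin.append_right]
  simp only [hterm, gmap_last, Fin.append_right]
  rw [Finset.prod_ite, Finset.prod_ite, Finset.prod_const_one, mul_one,
    hxprod, hLprod]
  ring

lemma surj (s : Finset (Fin (n + m))) (hcard : s.card = n + 1) :
    ∃ a : Fin (n + 1) → Fin m, Monotone a ∧ Finset.image (gmap a) Finset.univ = s := by
  classical
  set S : Finset (Fin n) := Finset.univ.filter (fun j => Fin.castAdd m j ∈ s) with hS
  set V : Finset (Fin m) := Finset.univ.filter (fun v => Fin.natAdd n v ∈ s) with hV
  have hsplit : s = S.image (Fin.castAdd m) ∪ V.image (Fin.natAdd n) := by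
    ext p
    induction p using Fin.addCases with
    | left j =>
      simp only [Finset.mem_union, Finset.mem_image, hS, hV, Finset.mem_filter,
        Finset.mem_univ, true_and]
      constructor
      · intro hp; exact Or.inl ⟨j, hp, rfl⟩
      · rintro (⟨j', hj', he⟩ | ⟨v, hv, he⟩)
        · rwa [← Fin.castAdd_injective _ _ he]
        · exact absurd he.symm (castAdd_ne_natAdd _ _)
    | right v =>
      simp only [Finset.mem_union, Finset.mem_image, hS, hV, Finset.mem_filter,
        Finset.mem_univ, true_and]
      constructor
      · intro hp; exact Or.inr ⟨v, hp, rfl⟩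
      · rintro (⟨j', hj', he⟩ | ⟨v', hv', he⟩)
        · exact absurd he (castAdd_ne_natAdd _ _)
        · rwa [← natAdd_inj he]
  have hdisj : Disjoint (S.image (Fin.castAdd m)) (V.image (Fin.natAdd n)) := by
    rw [Finset.disjoint_left]
    rintro p hp hp'
    obtain ⟨j, -, rfl⟩ := Finset.mem_image.mp hp
    obtain ⟨v, -, he⟩ := Finset.mem_image.mp hp'
    exact absurd he.symm (castAdd_ne_natAdd _ _)
  have hcards : S.card + V.card = n + 1 := by
    rw [hsplit, Finset.card_union_of_disjoint hdisj,
      Finset.card_image_of_injective _ (Fin.castAdd_injective _ _),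
      Finset.card_image_of_injective _ natAdd_inj] at hcard
    exact hcard
  have hScard : S.card ≤ n := le_trans (Finset.card_le_univ S) (by simp)
  -- the counting function
  set c : Fin (n + 1) → ℕ :=
    fun i => (Finset.univ.filter (fun j : Fin n => (j : ℕ) < (i : ℕ) ∧ j ∉ S)).card with hc
  have cmono : Monotone c := by
    intro i i' hle
    apply Finset.card_le_card
    intro j hj
    rw [Finset.mem_filter] at hj ⊢
    exact ⟨hj.1, lt_of_lt_of_le hj.2.1 (Fin.le_def.mp hle), hj.2.2⟩
  have c0 : c 0 = 0 := by
    rw [hc]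
    simp only [Fin.val_zero, Nat.not_lt_zero, false_and, Finset.filter_false,
      Finset.card_empty]
  have clast : c (Fin.last n) = n - S.card := by
    have hset : Finset.univ.filter (fun j : Fin n => (j : ℕ) < ((Fin.last n : Fin (n+1)) : ℕ) ∧ j ∉ S) = Sᶜ := by
      ext j
      simp [Fin.val_last, j.isLt]
    rw [hc]
    simp only [hset, Finset.card_compl, Fintype.card_fin]
  have cstep : ∀ j : Fin n, c j.succ = c j.castSucc + (if j ∈ S then 0 else 1) := by
    intro j
    by_cases hjS : j ∈ S
    · rw [if_pos hjS, add_zero]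
      have hset : Finset.univ.filter (fun j' : Fin n => (j' : ℕ) < ((j.succ : Fin (n+1)) : ℕ) ∧ j' ∉ S)
          = Finset.univ.filter
              (fun j' : Fin n => (j' : ℕ) < ((j.castSucc : Fin (n+1)) : ℕ) ∧ j' ∉ S) := by
        ext j'
        simp only [Finset.mem_filter, Finset.mem_univ, true_and, Fin.val_succ, Fin.coe_castSucc]
        constructor
        · rintro ⟨h1, h2⟩
          refine ⟨?_, h2⟩
          rcases Nat.lt_succ_iff_lt_or_eq.mp h1 with h | h
          · exact h
          · exact absurd (Fin.val_injective h ▸ hjS) h2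
        · rintro ⟨h1, h2⟩
          exact ⟨Nat.lt_succ_of_lt h1, h2⟩
      simp only [hc]
      rw [hset]
    · rw [if_neg hjS]
      have hset : Finset.univ.filter (fun j' : Fin n => (j' : ℕ) < ((j.succ : Fin (n+1)) : ℕ) ∧ j' ∉ S)
          = insert j (Finset.univ.filter
              (fun j' : Fin n => (j' : ℕ) < ((j.castSucc : Fin (n+1)) : ℕ) ∧ j' ∉ S)) := by
        ext j'
        simp only [Finset.mem_filter, Finset.mem_univ, true_and, Finset.mem_insert,
          Fin.val_succ, Fin.coe_castSucc]
        constructor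
        · rintro ⟨h1, h2⟩
          rcases Nat.lt_succ_iff_lt_or_eq.mp h1 with h | h
          · exact Or.inr ⟨h, h2⟩
          · exact Or.inl (Fin.val_injective h)
        · rintro (rfl | ⟨h1, h2⟩)
          · exact ⟨Nat.lt_succ_self _, hjS⟩
          · exact ⟨Nat.lt_succ_of_lt h1, h2⟩
      simp only [hc]
      rw [hset, Finset.card_insert_of_notMem (by simp)]
  have cbound : ∀ i : Fin (n + 1), c i < V.card := by
    intro i
    have h1 : c i ≤ n - S.card := clast ▸ cmono (Fin.le_last i)
    omega
  have cstep' : ∀ j : Fin n, c j.succ ≤ c j.castSucc + 1 := by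
    intro j
    rw [cstep j]
    split <;> omega
  -- intermediate value property of c
  have ivt : ∀ r : ℕ, r < V.card → ∃ i : Fin (n + 1), c i = r := by
    intro r hr
    have hT0 : (0 : Fin (n + 1)) ∈ Finset.univ.filter (fun i : Fin (n+1) => c i ≤ r) := by
      simp [c0]
    have hTne : (Finset.univ.filter (fun i : Fin (n+1) => c i ≤ r)).Nonempty := ⟨0, hT0⟩
    set imax := (Finset.univ.filter (fun i : Fin (n+1) => c i ≤ r)).max' hTne with himax
    have h1 : c imax ≤ r := (Finset.mem_filter.mp (Finset.max'_mem _ hTne)).2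
    rcases eq_or_lt_of_le h1 with he | hlt
    · exact ⟨imax, he⟩
    · exfalso
      have hne : imax ≠ Fin.last n := by
        intro h
        rw [h, clast] at hlt
        omega
      obtain ⟨j, hj⟩ := Fin.exists_castSucc_eq.mpr hne
      have hcsucc : c j.succ ≤ r := by
        have := cstep' j
        rw [hj] at this
        omega
      have hmem : j.succ ∈ Finset.univ.filter (fun i : Fin (n+1) => c i ≤ r) :=
        Finset.mem_filter.mpr ⟨Finset.mem_univ _, hcsucc⟩
      have hle := Finset.le_max' _ _ hmem
      rw [← himax, ← hj] at hle
      exact absurd hle (not_le_of_gt (Fin.castSucc_lt_succ (i := j)))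
  -- the monotone sequence
  set a : Fin (n + 1) → Fin m := fun i => V.orderEmbOfFin rfl ⟨c i, cbound i⟩ with ha
  have hamono : Monotone a := by
    intro i i' hle
    exact (V.orderEmbOfFin rfl).monotone (by simp only [Fin.mk_le_mk]; exact cmono hle)
  have hrptS : ∀ j : Fin n, (a j.castSucc = a j.succ ↔ j ∈ S) := by
    intro j
    constructor
    · intro h
      have h2 := (V.orderEmbOfFin rfl).injective h
      rw [Fin.mk.injEq] at h2
      by_contra hjS
      rw [cstep j, if_neg hjS] at h2
      omega
    · intro h
      have h2 : c j.castSucc = c j.succ := by rw [cstep j, if_pos h, add_zero]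
      rw [ha]
      exact congrArg _ (Fin.ext h2)
  have himgV : Finset.image a Finset.univ = V := by
    apply Finset.Subset.antisymm
    · intro v hv
      obtain ⟨i, -, rfl⟩ := Finset.mem_image.mp hv
      exact Finset.orderEmbOfFin_mem V rfl _
    · intro v hv
      have hv' : v ∈ Set.range (V.orderEmbOfFin rfl) := by
        rw [Finset.range_orderEmbOfFin]; exact hv
      obtain ⟨⟨r, hr⟩, hrv⟩ := hv'
      obtain ⟨i, hi⟩ := ivt r hr
      refine Finset.mem_image.mpr ⟨i, Finset.mem_univ _, ?_⟩
      rw [← hrv, ha]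
      exact congrArg _ (Fin.ext hi)
  refine ⟨a, hamono, ?_⟩
  ext p
  induction p using Fin.addCases with
  | left j =>
    rw [mem_castAdd_iff, hrptS j, hS]
    simp
  | right v =>
    rw [mem_natAdd_iff, himgV, hV]
    simp

theorem main {R : Type*} [CommSemiring R] (t : Fin n → R) (x : Fin m → R) :
    ∑ a ∈ Finset.univ.filter (fun a : Fin (n + 1) → Fin m => Monotone a),
        (∏ v ∈ Finset.image a Finset.univ, x v) *
          ∏ j : Fin n, (if a j.castSucc = a j.succ then t j else 1) =
      epoly (n + 1) (Fin.append t x) := by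
  rw [epoly]
  refine Finset.sum_bij (fun a _ => Finset.image (gmap a) Finset.univ) ?_ ?_ ?_ ?_
  · intro a ha
    rw [Finset.mem_filter] at ha
    rw [Finset.mem_powersetCard_univ, Finset.card_image_of_injective _ (gmap_inj ha.2),
      Finset.card_univ, Fintype.card_fin]
  · intro a₁ ha₁ a₂ ha₂ h
    rw [Finset.mem_filter] at ha₁ ha₂
    replace h : Finset.image (gmap a₁) Finset.univ = Finset.image (gmap a₂) Finset.univ := h
    refine monotone_ext ha₁.2 ha₂.2 (fun j => ?_) ?_
    · rw [← mem_castAdd_iff a₁ j, ← mem_castAdd_iff a₂ j, h]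
    · ext v
      rw [← mem_natAdd_iff a₁ v, ← mem_natAdd_iff a₂ v, h]
  · intro s hs
    rw [Finset.mem_powersetCard_univ] at hs
    obtain ⟨a, ha, hφ⟩ := surj s hs
    exact ⟨a, Finset.mem_filter.mpr ⟨Finset.mem_univ _, ha⟩, hφ⟩
  · intro a ha
    rw [Finset.mem_filter] at ha
    rw [Finset.prod_image (fun i _ i' _ h => gmap_inj ha.2 h)]
    exact (weight_eq t x ha.2).symm

end Stmt18Aux

/-- Refined single-column formula: `g_{(1^k)}(t; x) = e_k(t₁,…,t_{k-1}, x₁,…,x_m)`.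
An RPP of shape `(1^k)` is a weakly increasing sequence `a : Fin k → Fin m`; its weight is
`∏_{v distinct value} x_v · ∏_{j : a_j = a_{j+1}} t_j`. -/
theorem stmt18 {R : Type*} [CommSemiring R] (m k : ℕ) (hk : 1 ≤ k)
    (t : Fin (k - 1) → R) (x : Fin m → R) :
    ∑ a ∈ Finset.univ.filter (fun a : Fin k → Fin m => Monotone a),
        (∏ v ∈ Finset.image a Finset.univ, x v) *
          ∏ j : Fin (k - 1),
            (if a (Fin.cast (by omega : k - 1 + 1 = k) j.castSucc) =
                a (Fin.cast (by omega : k - 1 + 1 = k) j.succ) then t j else 1) =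
      epoly k (Fin.append t x) := by
  obtain ⟨n, rfl⟩ : ∃ n, k = n + 1 := ⟨k - 1, (Nat.succ_pred_eq_of_pos hk).symm⟩
  exact Stmt18Aux.main t x
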